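/- arXiv:2107.10884 — 2 statements merged into one kernel-verified Lean document; each statement's English description precedes it below -/
import Mathlib

section
/- If M belongs to M_up(k), i.e. M = [[M_A, M_B],[0, M_D]] with M_A symmetric k×k and M_D diagonal, then h(M) = I + M + (1/2)M² belongs to B_up(k) and det(h(M)) > 0. -/
open Matrix

/-- `h(M) = I + M + (1/2) M²`. -/
noncomputable def hmat {n : Type*} [Fintype n] [DecidableEq n]
    (M : Matrix n n ℝ) : Matrix n n ℝ :=
  1 + M + (1/2 : ℝ) • (M * M)

/-- The local parameter space `M_up(k)`: block matrices `[[M_A, M_B],[0, M_D]]`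
with `M_A` symmetric and `M_D` diagonal. -/
def Mup (k d : ℕ) : Set (Matrix (Fin k ⊕ Fin d) (Fin k ⊕ Fin d) ℝ) :=
  {X | ∃ (MA : Matrix (Fin k) (Fin k) ℝ) (MB : Matrix (Fin k) (Fin d) ℝ)
        (MD : Matrix (Fin d) (Fin d) ℝ),
      MA.IsSymm ∧ MD.IsDiag ∧ X = Matrix.fromBlocks MA MB 0 MD}

/-- The group `B_up(k)`: block matrices `[[B_A, B_B],[0, B_D]]`
with `B_A` invertible and `B_D` invertible diagonal. -/
def Bup (k d : ℕ) : Set (Matrix (Fin k ⊕ Fin d) (Fin k ⊕ Fin d) ℝ) :=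
  {X | ∃ (A : Matrix (Fin k) (Fin k) ℝ) (B : Matrix (Fin k) (Fin d) ℝ)
        (D : Matrix (Fin d) (Fin d) ℝ),
      IsUnit A ∧ D.IsDiag ∧ IsUnit D ∧ X = Matrix.fromBlocks A B 0 D}

private lemma posDef_smul_half {n : Type*} [Fintype n] {M : Matrix n n ℝ}
    (h : M.PosDef) : ((1/2 : ℝ) • M).PosDef := by
  refine Matrix.PosDef.of_dotProduct_mulVec_pos ?_ fun x hx => ?_
  · unfold Matrix.IsHermitian
    rw [conjTranspose_smul, h.isHermitian]
    simp
  · have := h.dotProduct_mulVec_pos hx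
    rw [smul_mulVec, dotProduct_smul]
    positivity

private lemma posDef_hmat_of_symm {n : Type*} [Fintype n] [DecidableEq n]
    {S : Matrix n n ℝ} (hS : S.IsSymm) : (hmat S).PosDef := by
  have hSH : (S + 1)ᴴ = S + 1 := by
    ext i j
    have := congrFun (congrFun hS i) j
    simp only [Matrix.transpose_apply] at this
    simp [Matrix.conjTranspose_apply, Matrix.one_apply, this, eq_comm]
  have key : hmat S = (1/2 : ℝ) • ((S + 1)ᴴ * (S + 1) + 1) := by
    rw [hSH, hmat]
    have : (S + 1) * (S + 1) = S * S + S + S + 1 := by noncomm_ring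
    rw [this]
    module
  rw [key]
  exact posDef_smul_half
    (Matrix.PosDef.posSemidef_add (Matrix.posSemidef_conjTranspose_mul_self (S + 1))
      Matrix.PosDef.one)

/-- If `M ∈ M_up(k)`, then `h(M) = I + M + (1/2)M² ∈ B_up(k)` and `det (h M) > 0`. -/
theorem hmat_mem_Bup {k d : ℕ} (M : Matrix (Fin k ⊕ Fin d) (Fin k ⊕ Fin d) ℝ)
    (hM : M ∈ Mup k d) :
    hmat M ∈ Bup k d ∧ 0 < (hmat M).det := by
  obtain ⟨MA, MB, MD, hA, hD, rfl⟩ := hM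
  have hblock : hmat (fromBlocks MA MB 0 MD) =
      fromBlocks (hmat MA) (MB + (1/2 : ℝ) • (MA * MB + MB * MD)) 0 (hmat MD) := by
    simp [hmat, Matrix.fromBlocks_multiply, Matrix.fromBlocks_smul,
      ← Matrix.fromBlocks_one, Matrix.fromBlocks_add, smul_add]
  have hDsymm : MD.IsSymm := hD.isSymm
  have hApd : (hmat MA).PosDef := posDef_hmat_of_symm hA
  have hDpd : (hmat MD).PosDef := posDef_hmat_of_symm hDsymm
  have hAunit : IsUnit (hmat MA) := by
    rw [Matrix.isUnit_iff_isUnit_det]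
    exact (hApd.det_pos.ne').isUnit
  have hDunit : IsUnit (hmat MD) := by
    rw [Matrix.isUnit_iff_isUnit_det]
    exact (hDpd.det_pos.ne').isUnit
  have hDdiag : (hmat MD).IsDiag := by
    have : MD * MD = diagonal (fun i => MD.diag i * MD.diag i) := by
      conv_lhs => rw [← hD.diagonal_diag]
      rw [Matrix.diagonal_mul_diagonal]
    unfold hmat
    exact (Matrix.isDiag_one.add hD).add ((this ▸ Matrix.isDiag_diagonal _).smul _)
  constructor
  · exact ⟨hmat MA, MB + (1/2 : ℝ) • (MA * MB + MB * MD), hmat MD,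
      hAunit, hDdiag, hDunit, hblock⟩
  · rw [hblock, Matrix.det_fromBlocks_zero₂₁]
    exact mul_pos hApd.det_pos hDpd.det_pos
end

section
/- If B = [[B_A, B_B],[0, B_D]] ∈ B_up(k) with B_D diagonal invertible and B_A invertible, then the inverse of B Bᵀ admits the decomposition (B Bᵀ)⁻¹ = U_k U_kᵀ + diag-block matrix [[0,0],[0, B_D⁻²]], where U_k is the p×k matrix [−B_A⁻ᵀ; B_D⁻¹ B_Bᵀ B_A⁻ᵀ] (stacked vertically). In particular (BBᵀ)⁻¹ is a rank-k perturbation of a block-diagonal matrix. -/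
open Matrix

/-- For `B = [[B_A, B_B],[0, B_D]] ∈ B_up(k)` (`B_A` invertible, `B_D` invertible diagonal),
`(B Bᵀ)⁻¹ = U_k U_kᵀ + [[0,0],[0,B_D⁻²]]` with `U_k = [−B_A⁻ᵀ; B_D⁻¹ B_Bᵀ B_A⁻ᵀ]`,
and `U_k` has rank `k`; in particular `(BBᵀ)⁻¹` is a rank-`k` perturbation of a
block-diagonal matrix. -/
theorem inv_BBt_rank_k_decomposition {k d : ℕ}
    (A : Matrix (Fin k) (Fin k) ℝ) (B : Matrix (Fin k) (Fin d) ℝ)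
    (D : Matrix (Fin d) (Fin d) ℝ)
    (hA : IsUnit A) (hDdiag : D.IsDiag) (hD : IsUnit D) :
    ((Matrix.fromBlocks A B 0 D) * (Matrix.fromBlocks A B 0 D)ᵀ)⁻¹
        = (Matrix.fromRows (-(A⁻¹)ᵀ) (D⁻¹ * Bᵀ * (A⁻¹)ᵀ)) *
            (Matrix.fromRows (-(A⁻¹)ᵀ) (D⁻¹ * Bᵀ * (A⁻¹)ᵀ))ᵀ
          + Matrix.fromBlocks 0 0 0 (D⁻¹ * D⁻¹) ∧
      (Matrix.fromRows (-(A⁻¹)ᵀ) (D⁻¹ * Bᵀ * (A⁻¹)ᵀ)).rank = k := by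
  have hAd : IsUnit A.det := (Matrix.isUnit_iff_isUnit_det A).mp hA
  have hDt : Dᵀ = D := hDdiag.isSymm
  have hDit : (D⁻¹)ᵀ = D⁻¹ := by rw [Matrix.transpose_nonsing_inv, hDt]
  constructor
  · rw [Matrix.mul_inv_rev, ← Matrix.transpose_nonsing_inv,
      Matrix.inv_fromBlocks_zero₂₁_of_isUnit_iff A B D (iff_of_true hA hD)]
    rw [Matrix.transpose_fromRows, Matrix.fromRows_mul_fromCols,
      Matrix.fromBlocks_transpose, Matrix.fromBlocks_multiply,
      Matrix.fromBlocks_add]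
    congr 1 <;>
      simp [Matrix.transpose_mul, hDit, Matrix.mul_assoc, Matrix.neg_mul, Matrix.mul_neg]
  · have h1 : (Matrix.fromCols (-Aᵀ) (0 : Matrix (Fin k) (Fin d) ℝ)) *
        (Matrix.fromRows (-(A⁻¹)ᵀ) (D⁻¹ * Bᵀ * (A⁻¹)ᵀ)) = 1 := by
      rw [Matrix.fromCols_mul_fromRows]
      simp [← Matrix.transpose_mul, Matrix.nonsing_inv_mul A hAd]
    refine le_antisymm (by simpa using Matrix.rank_le_card_width (Matrix.fromRows (-(A⁻¹)ᵀ) (D⁻¹ * Bᵀ * (A⁻¹)ᵀ))) ?_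
    have h2 := Matrix.rank_mul_le_right (Matrix.fromCols (-Aᵀ) (0 : Matrix (Fin k) (Fin d) ℝ))
      (Matrix.fromRows (-(A⁻¹)ᵀ) (D⁻¹ * Bᵀ * (A⁻¹)ᵀ))
    rw [h1] at h2
    simpa using h2
end
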